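/- Let E ⊆ ℂ be a nonempty closed set satisfying condition (U)_{2,β} for some β > 0. Then there exist positive constants A, r₀ and η, with exp(−η·log(2/t)/log log(4/t)) increasing in t on (0, 2r₀), such that for every increasing function g : (0,∞) → (0,∞) satisfying g(t) = exp(−η·log(2/t)/log log(4/t)) for all t ∈ (0, 2r₀), and for every a ∈ E and every r ∈ (0, r₀), one has Λ_g(E ∩ B̄(a,r)) ≥ A·g(2r), where B̄(a,r) is the closed disc of center a and radius r. -/

import Mathlib

open Metric Set
open scoped ENNReal

/-- A set `E ⊆ ℂ` satisfies condition `(U)_{2,β}`. -/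
def CondU2 (E : Set ℂ) (β : ℝ) : Prop :=
  ∃ C > (0 : ℝ), ∃ r₀ > (0 : ℝ), ∀ a ∈ E, ∀ r ∈ Set.Ioo (0 : ℝ) r₀,
    ({z : ℂ | C * r * (Real.log (1 / r)) ^ (-β) ≤ dist z a ∧ dist z a ≤ r} ∩ E).Nonempty

/-- The `g`-Hausdorff content of `F ⊆ ℂ`:
`Λ_g(F) = inf { ∑ₖ g(diam Bₖ) : (Bₖ) a countable cover of F by closed discs }`. -/
noncomputable def hContent (g : ℝ → ℝ) (F : Set ℂ) : ℝ≥0∞ :=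
  ⨅ (B : ℕ → ℂ × ℝ) (_ : ∀ k, 0 ≤ (B k).2)
    (_ : F ⊆ ⋃ k, closedBall (B k).1 (B k).2),
    ∑' k, ENNReal.ofReal (g (diam (closedBall (B k).1 (B k).2)))

noncomputable def Rseq (C β r : ℝ) : ℕ → ℝ
  | 0 => r
  | n + 1 => C / 8 * Rseq C β r n * Real.log (2 / Rseq C β r n) ^ (-β)

noncomputable def genPt (f : ℂ → ℕ → ℂ) (a : ℂ) (σ : ℕ → Bool) : ℕ → ℂ
  | 0 => a
  | n + 1 => if σ n then f (genPt f a σ n) n else genPt f a σ n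

lemma diam_closedBall_complex (c : ℂ) {ρ : ℝ} (h : 0 ≤ ρ) :
    Metric.diam (Metric.closedBall c ρ) = 2 * ρ := by
  refine le_antisymm (Metric.diam_closedBall h) ?_
  have h1 : c + (ρ:ℂ) ∈ Metric.closedBall c ρ := by
    simp [Metric.mem_closedBall, dist_eq_norm, abs_of_nonneg h]
  have h2 : c - (ρ:ℂ) ∈ Metric.closedBall c ρ := by
    simp [Metric.mem_closedBall, dist_eq_norm, abs_of_nonneg h]
  have := Metric.dist_le_diam_of_mem Metric.isBounded_closedBall h1 h2
  have hd : dist (c + (ρ:ℂ)) (c - (ρ:ℂ)) = 2 * ρ := by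
    rw [dist_eq_norm]
    have he : c + (ρ:ℂ) - (c - (ρ:ℂ)) = ((2*ρ : ℝ):ℂ) := by push_cast; ring
    rw [he, Complex.norm_real, Real.norm_eq_abs, abs_of_nonneg (by linarith : (0:ℝ) ≤ 2*ρ)]
  linarith [hd ▸ this]

lemma log2_lt {x : ℝ} (hx : Real.exp 1 ≤ x) : Real.log 2 < x := by
  have h1 : Real.log 2 ≤ 1 := by
    have := Real.log_le_sub_one_of_pos (by norm_num : (0:ℝ) < 2); linarith
  have h2 : (2:ℝ) ≤ Real.exp 1 := by have := Real.add_one_le_exp (1:ℝ); linarith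
  linarith

lemma Hmono {x y : ℝ} (hx : Real.exp 1 ≤ x) (hxy : x ≤ y) :
    (x - Real.log 2) / Real.log x ≤ (y - Real.log 2) / Real.log y := by
  have hx0 : (0:ℝ) < x := lt_of_lt_of_le (Real.exp_pos 1) hx
  have hy0 : (0:ℝ) < y := lt_of_lt_of_le hx0 hxy
  have hlx : (1:ℝ) ≤ Real.log x := by
    rw [show (1:ℝ) = Real.log (Real.exp 1) by simp]
    exact Real.log_le_log (Real.exp_pos 1) hx
  have hly : (1:ℝ) ≤ Real.log y := hlx.trans (Real.log_le_log hx0 hxy)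
  have hlog2 : Real.log 2 < x := log2_lt hx
  rw [div_le_div_iff₀ (by linarith) (by linarith)]
  have hconc : Real.log y ≤ Real.log x + (y - x) / x := by
    have h1 : Real.log (y / x) ≤ y / x - 1 :=
      Real.log_le_sub_one_of_pos (div_pos hy0 hx0)
    rw [Real.log_div hy0.ne' hx0.ne'] at h1
    have h2 : y / x - 1 = (y - x) / x := by field_simp
    linarith [h2 ▸ h1]
  have hfrac : (x - Real.log 2) / x ≤ 1 := by
    rw [div_le_one hx0]; linarith [Real.log_pos (by norm_num : (1:ℝ) < 2)]
  have e1 : (x - Real.log 2) * Real.log y ≤ (x - Real.log 2) * (Real.log x + (y - x) / x) :=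
    mul_le_mul_of_nonneg_left hconc (by linarith)
  have e2 : (x - Real.log 2) * ((y - x) / x) ≤ (y - x) * Real.log x := by
    calc (x - Real.log 2) * ((y - x) / x) = (y - x) * ((x - Real.log 2) / x) := by ring
      _ ≤ (y - x) * 1 := mul_le_mul_of_nonneg_left hfrac (by linarith)
      _ ≤ (y - x) * Real.log x := mul_le_mul_of_nonneg_left hlx (by linarith)
  have e3 : (x - Real.log 2) * (Real.log x + (y - x) / x)
      = (x - Real.log 2) * Real.log x + (x - Real.log 2) * ((y - x) / x) := by ring
  have e4 : (y - Real.log 2) * Real.log x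
      = (x - Real.log 2) * Real.log x + (y - x) * Real.log x := by ring
  linarith

lemma Hincr {x d : ℝ} (hx : Real.exp 1 ≤ x) (hd : 0 ≤ d) :
    (x + d - Real.log 2) / Real.log (x + d) ≤ (x - Real.log 2) / Real.log x + d / Real.log x := by
  have hx0 : (0:ℝ) < x := lt_of_lt_of_le (Real.exp_pos 1) hx
  have hlx : (1:ℝ) ≤ Real.log x := by
    rw [show (1:ℝ) = Real.log (Real.exp 1) by simp]
    exact Real.log_le_log (Real.exp_pos 1) hx
  have hlxd : Real.log x ≤ Real.log (x + d) := Real.log_le_log hx0 (by linarith)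
  have hlog2 : Real.log 2 < x := log2_lt hx
  have h1 : (x + d - Real.log 2) / Real.log (x + d) ≤ (x + d - Real.log 2) / Real.log x :=
    div_le_div_of_nonneg_left (by linarith) (by linarith) hlxd
  calc (x + d - Real.log 2) / Real.log (x + d) ≤ (x + d - Real.log 2) / Real.log x := h1
    _ = (x - Real.log 2) / Real.log x + d / Real.log x := by ring

lemma crux_exp {η b x y : ℝ} (hη : 0 < η) (hηb : η * b = Real.log 2 / 2)
    (n : ℕ) (h : y ≤ x + (n + 1) * b) :
    Real.exp (-(η * b)) * Real.exp (-η * x) * (1/2)^n ≤ Real.exp (-η * y) := by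
  have hlog2 : (0:ℝ) < Real.log 2 := Real.log_pos (by norm_num)
  have h1 : η * y ≤ η * x + η * b + (n:ℝ) * (η * b) := by
    have h2 := mul_le_mul_of_nonneg_left h (le_of_lt hη)
    have h3 : η * (x + ((n:ℝ) + 1) * b) = η * x + η * b + (n:ℝ) * (η * b) := by ring
    push_cast at h2
    linarith [h3 ▸ h2]
  have hpow : ((1:ℝ)/2)^n ≤ Real.exp (-((n:ℝ) * (η * b))) := by
    have he : Real.exp (-((n:ℝ) * (η * b))) = Real.exp (-(η * b)) ^ n := by
      rw [show -((n:ℝ) * (η * b)) = (n:ℝ) * (-(η * b)) by ring, Real.exp_nat_mul]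
    rw [he]
    apply pow_le_pow_left₀ (by norm_num)
    rw [hηb, show (1:ℝ)/2 = Real.exp (-(Real.log 2)) by
      rw [Real.exp_neg, Real.exp_log (by norm_num : (0:ℝ) < 2)]; norm_num]
    exact Real.exp_le_exp.mpr (by linarith)
  calc Real.exp (-(η * b)) * Real.exp (-η * x) * (1/2)^n
      ≤ Real.exp (-(η * b)) * Real.exp (-η * x) * Real.exp (-((n:ℝ) * (η * b))) :=
        mul_le_mul_of_nonneg_left hpow (by positivity)
    _ = Real.exp (-(η * b) + -η * x + -((n:ℝ) * (η * b))) := by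
        rw [← Real.exp_add, ← Real.exp_add]
    _ ≤ Real.exp (-η * y) := Real.exp_le_exp.mpr (by nlinarith)


set_option maxHeartbeats 2000000 in
/-- If a nonempty closed set `E ⊆ ℂ` satisfies `(U)_{2,β}` for some `β > 0`,
then there are `A, r₀, η > 0` with `exp(−η·log(2/t)/log log(4/t))` increasing
on `(0, 2r₀)`, such that for every increasing `g : (0,∞) → (0,∞)` agreeing
with that function on `(0, 2r₀)` one has `Λ_g(E ∩ B̄(a,r)) ≥ A·g(2r)` for all
`a ∈ E`, `r ∈ (0, r₀)`. -/
theorem stmt_15 (E : Set ℂ) (hne : E.Nonempty) (hcl : IsClosed E)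
    (β : ℝ) (hβ : 0 < β) (hU : CondU2 E β) :
    ∃ A > (0 : ℝ), ∃ r₀ > (0 : ℝ), ∃ η > (0 : ℝ),
      MonotoneOn
        (fun t : ℝ => Real.exp (-η * (Real.log (2 / t) / Real.log (Real.log (4 / t)))))
        (Set.Ioo (0 : ℝ) (2 * r₀)) ∧
      ∀ g : ℝ → ℝ, (∀ t ∈ Set.Ioi (0 : ℝ), 0 < g t) →
        MonotoneOn g (Set.Ioi (0 : ℝ)) →
        (∀ t ∈ Set.Ioo (0 : ℝ) (2 * r₀),
          g t = Real.exp (-η * (Real.log (2 / t) / Real.log (Real.log (4 / t))))) →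
        ∀ a ∈ E, ∀ r ∈ Set.Ioo (0 : ℝ) r₀,
          ENNReal.ofReal (A * g (2 * r)) ≤ hContent g (E ∩ closedBall a r) := by
  obtain ⟨C, hC, r₁, hr₁, hann⟩ := hU
  set Λ : ℝ := max (Real.exp 1) (max (8 / C) (C ^ (1/β))) with hΛdef
  have hΛe : Real.exp 1 ≤ Λ := le_max_left _ _
  have h2e : (2:ℝ) ≤ Real.exp 1 := by have := Real.add_one_le_exp (1:ℝ); linarith
  have hΛ2 : (2:ℝ) ≤ Λ := h2e.trans hΛe
  have hΛpos : (0:ℝ) < Λ := by linarith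
  have hΛC8 : 8 / C ≤ Λ := le_trans (le_max_left _ _) (le_max_right _ _)
  have hΛβ : C ≤ Λ ^ β := by
    have h1 : C ^ (1/β) ≤ Λ := le_trans (le_max_right _ _) (le_max_right _ _)
    have h2 : (C ^ (1/β)) ^ β ≤ Λ ^ β :=
      Real.rpow_le_rpow (Real.rpow_nonneg hC.le _) h1 hβ.le
    rwa [← Real.rpow_mul hC.le, one_div_mul_cancel hβ.ne', Real.rpow_one] at h2
  set r₀ : ℝ := min (r₁ / 2) (2 * Real.exp (-Λ)) with hr₀def
  have hr₀pos : 0 < r₀ := lt_min (by linarith) (by positivity)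
  have hr₀r₁ : r₀ ≤ r₁ / 2 := min_le_left _ _
  have hr₀Λ : r₀ ≤ 2 * Real.exp (-Λ) := min_le_right _ _
  set η : ℝ := Real.log 2 / (2 * (β + 1)) with hηdef
  have hlog2 : (0:ℝ) < Real.log 2 := Real.log_pos (by norm_num)
  have hηpos : 0 < η := by positivity
  set A : ℝ := Real.exp (-(η * (β + 1))) / 2 with hAdef
  have hApos : 0 < A := by positivity
  have hA1 : A ≤ 1 := by
    have : Real.exp (-(η * (β + 1))) ≤ 1 := Real.exp_le_one_iff.mpr (by nlinarith)
    linarith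
  have hμkey : ∀ t : ℝ, 0 < t → t ≤ 2 * Real.exp (-Λ) → Λ ≤ Real.log (2 / t) := by
    intro t ht hle
    rw [Real.le_log_iff_exp_le (by positivity), le_div_iff₀ ht]
    calc Real.exp Λ * t ≤ Real.exp Λ * (2 * Real.exp (-Λ)) :=
          mul_le_mul_of_nonneg_left hle (Real.exp_pos Λ).le
      _ = 2 * (Real.exp Λ * Real.exp (-Λ)) := by ring
      _ = 2 := by rw [← Real.exp_add]; simp
  -- log(2/t) = log(4/t) - log 2 for t > 0
  have hlog24 : ∀ t : ℝ, 0 < t → Real.log (2 / t) = Real.log (4 / t) - Real.log 2 := by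
    intro t ht
    rw [Real.log_div (by norm_num) ht.ne', Real.log_div (by norm_num) ht.ne',
      show (4:ℝ) = 2 * 2 by norm_num, Real.log_mul (by norm_num) (by norm_num)]
    ring
  have hμ4 : ∀ t : ℝ, 0 < t → t < 2 * r₀ → Λ ≤ Real.log (4 / t) := by
    intro t ht hlt
    have h1 : Λ ≤ Real.log (2 / (t/2)) :=
      hμkey (t/2) (by linarith) (by
        have : t / 2 < r₀ := by linarith
        linarith [hr₀Λ])
    have : (2:ℝ) / (t/2) = 4 / t := by field_simp; ring
    rwa [this] at h1
  refine ⟨A, hApos, r₀, hr₀pos, η, hηpos, ?_, ?_⟩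
  · -- monotonicity
    intro t₁ ht₁ t₂ ht₂ h12
    simp only
    rw [Real.exp_le_exp]
    have hμ1 : Real.exp 1 ≤ Real.log (4 / t₂) := hΛe.trans (hμ4 t₂ ht₂.1 ht₂.2)
    have hμ2 : Real.log (4 / t₂) ≤ Real.log (4 / t₁) :=
      Real.log_le_log (div_pos (by norm_num) ht₂.1) (by
        apply div_le_div_of_nonneg_left (by norm_num) ht₁.1 h12)
    have hm := Hmono hμ1 hμ2
    rw [hlog24 t₁ ht₁.1, hlog24 t₂ ht₂.1]
    have hη' : -η ≤ 0 := by linarith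
    exact mul_le_mul_of_nonpos_left hm hη'
  · -- main estimate
    intro g hgpos hgmono hgeq a ha r hr
    obtain ⟨hr0, hrr₀⟩ := hr
    have hrΛ : r ≤ 2 * Real.exp (-Λ) := le_of_lt (lt_of_lt_of_le hrr₀ hr₀Λ)
    set R : ℕ → ℝ := Rseq C β r with hRdef
    have hRrec : ∀ n, R (n + 1) = C / 8 * R n * Real.log (2 / R n) ^ (-β) := fun n => rfl
    have hR0 : R 0 = r := rfl
    -- contraction factor
    have hkey : ∀ ρ : ℝ, 0 < ρ → ρ ≤ r → C / 8 * Real.log (2 / ρ) ^ (-β) ≤ 1 / 8 := by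
      intro ρ hρ hρr
      have hμρ : Λ ≤ Real.log (2 / ρ) := hμkey ρ hρ (hρr.trans hrΛ)
      have hℓpos : (0:ℝ) < Real.log (2 / ρ) := by linarith
      have h1 : C ≤ Real.log (2 / ρ) ^ β :=
        hΛβ.trans (Real.rpow_le_rpow hΛpos.le hμρ hβ.le)
      have h2 : (0:ℝ) < Real.log (2 / ρ) ^ β := Real.rpow_pos_of_pos hℓpos β
      rw [Real.rpow_neg hℓpos.le]
      rw [div_mul_eq_mul_div, div_le_div_iff₀ (by norm_num) (by norm_num)]
      have h3 : C * (Real.log (2 / ρ) ^ β)⁻¹ ≤ 1 := by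
        rw [mul_inv_le_iff₀ h2, one_mul]; exact h1
      linarith
    have hRfacts : ∀ n, 0 < R n ∧ R n ≤ r := by
      intro n
      induction n with
      | zero => exact ⟨hr0, le_refl r⟩
      | succ n ih =>
        obtain ⟨ihp, ihr⟩ := ih
        have hμρ : Λ ≤ Real.log (2 / R n) := hμkey _ ihp (ihr.trans hrΛ)
        have hℓpos : (0:ℝ) < Real.log (2 / R n) := by linarith
        constructor
        · rw [hRrec]
          have := Real.rpow_pos_of_pos hℓpos (-β)
          positivity
        · rw [hRrec]
          calc C / 8 * R n * Real.log (2 / R n) ^ (-β)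
              = (C / 8 * Real.log (2 / R n) ^ (-β)) * R n := by ring
            _ ≤ (1/8) * R n := mul_le_mul_of_nonneg_right (hkey _ ihp ihr) ihp.le
            _ ≤ r := by linarith
    have hRpos : ∀ n, 0 < R n := fun n => (hRfacts n).1
    have hRler : ∀ n, R n ≤ r := fun n => (hRfacts n).2
    have hRstep : ∀ n, R (n + 1) ≤ R n / 8 := by
      intro n
      rw [hRrec]
      calc C / 8 * R n * Real.log (2 / R n) ^ (-β)
          = (C / 8 * Real.log (2 / R n) ^ (-β)) * R n := by ring
        _ ≤ (1/8) * R n := mul_le_mul_of_nonneg_right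
            (hkey _ (hRpos n) (hRler n)) (hRpos n).le
        _ = R n / 8 := by ring
    have hRanti : Antitone R := antitone_nat_of_succ_le (fun n => by
      linarith [hRstep n, hRpos n])
    have hRgeo : ∀ n, R n ≤ r * (1/8)^n := by
      intro n
      induction n with
      | zero => simp [hR0]
      | succ n ih =>
        calc R (n+1) ≤ R n / 8 := hRstep n
          _ ≤ r * (1/8)^n / 8 := by linarith
          _ = r * (1/8)^(n+1) := by ring
    have hμR : ∀ n, Λ ≤ Real.log (2 / R n) := fun n => hμkey _ (hRpos n) ((hRler n).trans hrΛ)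
    -- choice of points
    have hex : ∀ (x : ℂ) (n : ℕ), ∃ y : ℂ,
        x ∈ E → y ∈ E ∧ 4 * R (n+1) ≤ dist y x ∧ dist y x ≤ R n / 2 := by
      intro x n
      by_cases hx : x ∈ E
      · have hs0 : 0 < R n / 2 := by linarith [hRpos n]
        have hs1 : R n / 2 < r₁ := by
          have : R n ≤ r := hRler n
          have : r < r₀ := hrr₀
          have : r₀ ≤ r₁ / 2 := hr₀r₁
          linarith [hRler n, hr₁]
        obtain ⟨y, hy⟩ := hann x hx (R n / 2) ⟨hs0, hs1⟩
        obtain ⟨⟨hy1, hy2⟩, hyE⟩ := hy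
        refine ⟨y, fun _ => ⟨hyE, ?_, hy2⟩⟩
        have heq : (1:ℝ) / (R n / 2) = 2 / R n := by
          field_simp
        have : C * (R n / 2) * Real.log (1 / (R n / 2)) ^ (-β) = 4 * R (n+1) := by
          rw [heq, hRrec]; ring
        linarith [this ▸ hy1]
      · exact ⟨x, fun h => absurd h hx⟩
    choose f hf using hex
    set G : (ℕ → Bool) → ℕ → ℂ := genPt f a with hGdef
    have hG0 : ∀ σ, G σ 0 = a := fun σ => rfl
    have hGsucc : ∀ σ n, G σ (n+1) = if σ n then f (G σ n) n else G σ n := fun σ n => rfl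
    have hGmem : ∀ σ n, G σ n ∈ E := by
      intro σ n
      induction n with
      | zero => exact ha
      | succ n ih =>
        rw [hGsucc]
        cases hb : σ n
        · simpa using ih
        · simpa using (hf (G σ n) n ih).1
    have hGstep : ∀ σ n, dist (G σ (n+1)) (G σ n) ≤ R n / 2 := by
      intro σ n
      rw [hGsucc]
      cases hb : σ n
      · simp [hRpos n |>.le]; linarith [hRpos n]
      · simpa using (hf (G σ n) n (hGmem σ n)).2.2
    have hnest1 : ∀ σ n, closedBall (G σ (n+1)) (R (n+1)) ⊆ closedBall (G σ n) (R n) := by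
      intro σ n z hz
      rw [mem_closedBall] at hz ⊢
      calc dist z (G σ n) ≤ dist z (G σ (n+1)) + dist (G σ (n+1)) (G σ n) := dist_triangle _ _ _
        _ ≤ R (n+1) + R n / 2 := add_le_add hz (hGstep σ n)
        _ ≤ R n := by linarith [hRstep n, hRpos n]
    have hnest : ∀ σ m n, m ≤ n → closedBall (G σ n) (R n) ⊆ closedBall (G σ m) (R m) := by
      intro σ m n hmn
      induction n, hmn using Nat.le_induction with
      | base => exact subset_rfl
      | succ n hmn ih => exact (hnest1 σ n).trans ih
    have hGball : ∀ σ n, G σ n ∈ closedBall a r := by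
      intro σ n
      have := hnest σ 0 n (Nat.zero_le n) (mem_closedBall_self (hRpos n).le)
      rwa [hG0, hR0] at this
    have hGagree : ∀ n (σ σ' : ℕ → Bool), (∀ i, i < n → σ i = σ' i) → G σ n = G σ' n := by
      intro n
      induction n with
      | zero => intro σ σ' _; rfl
      | succ n ih =>
        intro σ σ' h
        rw [hGsucc, hGsucc, ih σ σ' (fun i hi => h i (by omega)), h n (by omega)]
    have hGsep : ∀ n (σ σ' : ℕ → Bool), (∃ i, i < n ∧ σ i ≠ σ' i) →
        ∀ p q : ℂ, dist p (G σ n) ≤ R n → dist q (G σ' n) ≤ R n → 2 * R n ≤ dist p q := by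
      intro n
      induction n with
      | zero => rintro σ σ' ⟨i, hi, _⟩; omega
      | succ n ih =>
        rintro σ σ' ⟨i, hi, hne'⟩ p q hp hq
        by_cases hlow : ∃ j, j < n ∧ σ j ≠ σ' j
        · have hp' : dist p (G σ n) ≤ R n := by
            calc dist p (G σ n) ≤ dist p (G σ (n+1)) + dist (G σ (n+1)) (G σ n) :=
                dist_triangle _ _ _
              _ ≤ R (n+1) + R n / 2 := add_le_add hp (hGstep σ n)
              _ ≤ R n := by linarith [hRstep n, hRpos n]
          have hq' : dist q (G σ' n) ≤ R n := by
            calc dist q (G σ' n) ≤ dist q (G σ' (n+1)) + dist (G σ' (n+1)) (G σ' n) :=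
                dist_triangle _ _ _
              _ ≤ R (n+1) + R n / 2 := add_le_add hq (hGstep σ' n)
              _ ≤ R n := by linarith [hRstep n, hRpos n]
          have := ih σ σ' hlow p q hp' hq'
          have hd : R (n+1) ≤ R n := hRanti (Nat.le_succ n)
          linarith
        · push_neg at hlow
          have hagree : G σ n = G σ' n := hGagree n σ σ' (fun j hj => hlow j hj)
          have hin : i = n := by
            by_contra hcon
            exact hne' (hlow i (by omega))
          have hbb : σ n ≠ σ' n := hin ▸ hne'
          set x := G σ n with hx
          have hxE : x ∈ E := hGmem σ n
          have hdist : 4 * R (n+1) ≤ dist (G σ (n+1)) (G σ' (n+1)) := by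
            rw [hGsucc, hGsucc, ← hagree, ← hx]
            cases hb : σ n <;> cases hb' : σ' n <;> simp [hb, hb'] at hbb ⊢
            · rw [dist_comm]; exact (hf x n hxE).2.1
            · exact (hf x n hxE).2.1
          have htri : dist (G σ (n+1)) (G σ' (n+1)) ≤
              dist p (G σ (n+1)) + dist p q + dist q (G σ' (n+1)) := by
            calc dist (G σ (n+1)) (G σ' (n+1))
                ≤ dist (G σ (n+1)) p + dist p (G σ' (n+1)) := dist_triangle _ _ _
              _ ≤ dist (G σ (n+1)) p + (dist p q + dist q (G σ' (n+1))) :=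
                  add_le_add (le_refl _) (dist_triangle _ _ _)
              _ = dist p (G σ (n+1)) + dist p q + dist q (G σ' (n+1)) := by
                  rw [dist_comm (G σ (n+1)) p]; ring
          linarith
    -- analytic chain
    set μ : ℕ → ℝ := fun n => Real.log (2 / R n) with hμdef
    have hμΛ : ∀ n, Λ ≤ μ n := hμR
    have hμe : ∀ n, Real.exp 1 ≤ μ n := fun n => hΛe.trans (hμΛ n)
    have hμpos : ∀ n, 0 < μ n := fun n => lt_of_lt_of_le (by linarith) (hμΛ n)
    have hlogμ1 : ∀ n, 1 ≤ Real.log (μ n) := by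
      intro n
      rw [show (1:ℝ) = Real.log (Real.exp 1) by simp]
      exact Real.log_le_log (Real.exp_pos 1) (hμe n)
    have hμrec : ∀ n, μ (n+1) = μ n + (β * Real.log (μ n) + Real.log (8 / C)) := by
      intro n
      have hRn := hRpos n
      have hℓpos := hμpos n
      have hpow : (0:ℝ) < μ n ^ β := Real.rpow_pos_of_pos hℓpos β
      have hquot : 2 / R (n+1) = (2 / R n) * ((8 / C) * μ n ^ β) := by
        rw [hRrec, Real.rpow_neg hℓpos.le]
        rw [hμdef]
        field_simp
      rw [hμdef]
      simp only
      rw [hquot, Real.log_mul (by positivity) (by positivity),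
        Real.log_mul (by positivity) hpow.ne', Real.log_rpow hℓpos]
      ring
    have hdpos : ∀ n, 0 ≤ β * Real.log (μ n) + Real.log (8 / C) := by
      intro n
      have h1 : Real.log (C / 8) ≤ β * Real.log (μ n) := by
        have hc8 : (0:ℝ) < C / 8 := by positivity
        have h2 : C / 8 ≤ μ n ^ β := by
          have : C ≤ μ n ^ β := hΛβ.trans (Real.rpow_le_rpow hΛpos.le (hμΛ n) hβ.le)
          linarith
        calc Real.log (C / 8) ≤ Real.log (μ n ^ β) := Real.log_le_log hc8 h2
          _ = β * Real.log (μ n) := Real.log_rpow (hμpos n) β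
      have h3 : Real.log (8 / C) = -Real.log (C / 8) := by
        rw [show (8:ℝ) / C = (C / 8)⁻¹ by field_simp, Real.log_inv]
      linarith
    have hdle : ∀ n, (β * Real.log (μ n) + Real.log (8 / C)) / Real.log (μ n) ≤ β + 1 := by
      intro n
      have h1 : Real.log (8 / C) ≤ Real.log (μ n) := by
        by_cases h8 : (1:ℝ) ≤ 8 / C
        · exact Real.log_le_log (by positivity) (hΛC8.trans (hμΛ n))
        · have : Real.log (8 / C) ≤ 0 :=
            Real.log_nonpos (by positivity) (le_of_not_ge h8)
          linarith [hlogμ1 n]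
      rw [div_le_iff₀ (by linarith [hlogμ1 n] : (0:ℝ) < Real.log (μ n))]
      have h2 : (β + 1) * Real.log (μ n) = β * Real.log (μ n) + Real.log (μ n) := by ring
      linarith
    set H : ℕ → ℝ := fun n => (μ n - Real.log 2) / Real.log (μ n) with hHdef
    have hHchain : ∀ n, H n ≤ H 0 + n * (β + 1) := by
      intro n
      induction n with
      | zero => simp
      | succ n ih =>
        have hstep : H (n+1) ≤ H n + (β + 1) := by
          have h1 := Hincr (hμe n) (hdpos n)
          show (μ (n+1) - Real.log 2) / Real.log (μ (n+1))
              ≤ (μ n - Real.log 2) / Real.log (μ n) + (β + 1)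
          rw [hμrec n]
          calc (μ n + (β * Real.log (μ n) + Real.log (8 / C)) - Real.log 2) /
                Real.log (μ n + (β * Real.log (μ n) + Real.log (8 / C)))
              ≤ (μ n - Real.log 2) / Real.log (μ n) +
                (β * Real.log (μ n) + Real.log (8 / C)) / Real.log (μ n) := h1
            _ ≤ (μ n - Real.log 2) / Real.log (μ n) + (β + 1) := by linarith [hdle n]
        push_cast
        linarith
    have hgR : ∀ n, g (2 * R n) = Real.exp (-η * H n) := by
      intro n
      have hmem : 2 * R n ∈ Set.Ioo (0:ℝ) (2 * r₀) := by
        constructor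
        · linarith [hRpos n]
        · have := hRler n; linarith
      have e1 : (4:ℝ) / (2 * R n) = 2 / R n := by
        rw [div_eq_div_iff (by linarith [hRpos n]) (hRpos n).ne']
        ring
      have e2 : Real.log (2 / (2 * R n)) = μ n - Real.log 2 := by
        rw [show (2:ℝ) / (2 * R n) = (2 / R n) / 2 by
          rw [div_div, mul_comm], Real.log_div (div_pos (by norm_num) (hRpos n)).ne' (by norm_num)]
      rw [hgeq _ hmem, e1, e2]
    have hH0 : g (2 * r) = Real.exp (-η * H 0) := by
      have := hgR 0
      rwa [hR0] at this
    have hcrux : ∀ n : ℕ,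
        Real.exp (-(η * (β + 1))) * g (2 * r) * (1/2)^n ≤ g (2 * R (n + 1)) := by
      intro n
      rw [hgR (n+1), hH0]
      have hηb : η * (β + 1) = Real.log 2 / 2 := by
        rw [hηdef]; field_simp
      have h1 : H (n+1) ≤ H 0 + ((n:ℝ) + 1) * (β + 1) := by
        have := hHchain (n+1); push_cast at this; linarith
      exact crux_exp hηpos hηb n h1
    -- covering estimate
    unfold hContent
    refine le_iInf fun B => le_iInf fun hBr => le_iInf fun hBcov => ?_
    have hg2r : 0 < g (2 * r) := hgpos (2 * r) (mem_Ioi.mpr (by linarith))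
    have hdiam : ∀ k, diam (closedBall (B k).1 (B k).2) = 2 * (B k).2 :=
      fun k => diam_closedBall_complex _ (hBr k)
    by_cases hbig : ∃ k, r ≤ (B k).2
    · obtain ⟨k, hk⟩ := hbig
      refine le_trans ?_ (ENNReal.le_tsum k)
      apply ENNReal.ofReal_le_ofReal
      rw [hdiam k]
      have hg1 : g (2 * r) ≤ g (2 * (B k).2) :=
        hgmono (mem_Ioi.mpr (by linarith)) (mem_Ioi.mpr (by linarith)) (by linarith)
      nlinarith
    · push_neg at hbig
      have hfind : ∀ k, 0 < (B k).2 → ∃ n, R (n + 1) ≤ (B k).2 := by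
        intro k hk
        obtain ⟨n, hn⟩ := exists_pow_lt_of_lt_one
          (show (0:ℝ) < (B k).2 / r by positivity) (show (1:ℝ)/8 < 1 by norm_num)
        refine ⟨n, ?_⟩
        have h1 : R (n+1) ≤ R n := hRanti (Nat.le_succ n)
        have h2 : R n ≤ r * (1/8)^n := hRgeo n
        have h3 : r * ((1/8:ℝ)^n) < r * ((B k).2 / r) := by
          apply mul_lt_mul_of_pos_left hn hr0
        have h4 : r * ((B k).2 / r) = (B k).2 := by field_simp
        linarith
      obtain ⟨q, hq1, hq2⟩ : ∃ q : ℕ → ℕ,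
          (∀ k, 0 < (B k).2 → R (q k + 1) ≤ (B k).2 ∧ (B k).2 < R (q k)) ∧
          (∀ k, ¬ 0 < (B k).2 → q k = k + 2) := by
        refine ⟨fun k => if h : 0 < (B k).2 then Nat.find (hfind k h) else k + 2,
          fun k hk => ?_, fun k hk => dif_neg hk⟩
        simp only [dif_pos hk]
        refine ⟨Nat.find_spec (hfind k hk), ?_⟩
        rcases Nat.eq_zero_or_pos (Nat.find (hfind k hk)) with h0 | hpos
        · rw [h0, hR0]; exact hbig k
        · have hmin := Nat.find_min (hfind k hk)
            (Nat.pred_lt (Nat.pos_iff_ne_zero.mp hpos))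
          push_neg at hmin
          rwa [Nat.pred_eq_sub_one, Nat.sub_add_cancel hpos] at hmin
      set w : ℕ → ℝ := fun k => ((B k).2 + R (q k)) / 2 with hwdef
      have hww : ∀ k, (B k).2 < w k ∧ w k ≤ R (q k) := by
        intro k
        rw [hwdef]
        by_cases hk : 0 < (B k).2
        · obtain ⟨hle, hlt⟩ := hq1 k hk
          constructor <;> simp only <;> linarith
        · have hk0 : (B k).2 = 0 := le_antisymm (le_of_not_gt hk) (hBr k)
          constructor <;> simp only <;> rw [hk0] <;> linarith [hRpos (q k)]
      set V : ℕ → Set ℂ := fun k => ball (B k).1 (w k) with hVdef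
      have hKcomp : IsCompact (E ∩ closedBall a r) :=
        (isCompact_closedBall a r).inter_left hcl
      have hKV : E ∩ closedBall a r ⊆ ⋃ k, V k :=
        hBcov.trans (Set.iUnion_mono fun k => closedBall_subset_ball (hww k).1)
      obtain ⟨T, hT⟩ := hKcomp.elim_finite_subcover V (fun k => isOpen_ball) hKV
      set N : ℕ := T.sup q with hNdef
      have hqN : ∀ k ∈ T, q k ≤ N := fun k hk => Finset.le_sup hk
      have hassign : ∀ τ : Fin N → Bool, ∃ k, k ∈ T ∧
          G (fun i => if h : i < N then τ ⟨i, h⟩ else false) N ∈ V k := by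
        intro τ
        have hmem : G (fun i => if h : i < N then τ ⟨i, h⟩ else false) N
            ∈ E ∩ closedBall a r := ⟨hGmem _ _, hGball _ _⟩
        obtain ⟨k, hkT, hkV⟩ := Set.mem_iUnion₂.mp (hT hmem)
        exact ⟨k, hkT, hkV⟩
      choose cc hccT hccV using hassign
      classical
      have hfiber : ∀ k ∈ T,
          (Finset.univ.filter (fun τ : Fin N → Bool => cc τ = k)).card ≤ 2 ^ (N - q k) := by
        intro k hkT
        have hmN : q k ≤ N := hqN k hkT
        have hagree : ∀ τ τ' : Fin N → Bool, cc τ = k → cc τ' = k →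
            ∀ i : ℕ, i < q k → ∀ hiN : i < N, τ ⟨i, hiN⟩ = τ' ⟨i, hiN⟩ := by
          intro τ τ' hτ hτ' i him hiN
          by_contra hne'
          set σ : ℕ → Bool := fun j => if h : j < N then τ ⟨j, h⟩ else false with hσdef
          set σ' : ℕ → Bool := fun j => if h : j < N then τ' ⟨j, h⟩ else false with hσ'def
          have hdiff : ∃ j, j < q k ∧ σ j ≠ σ' j := by
            refine ⟨i, him, ?_⟩
            rw [hσdef, hσ'def]
            simpa [dif_pos hiN] using hne'
          have hp : dist (G σ N) (G σ (q k)) ≤ R (q k) := by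
            have := hnest σ (q k) N hmN (mem_closedBall_self (hRpos N).le)
            rwa [mem_closedBall] at this
          have hq' : dist (G σ' N) (G σ' (q k)) ≤ R (q k) := by
            have := hnest σ' (q k) N hmN (mem_closedBall_self (hRpos N).le)
            rwa [mem_closedBall] at this
          have hsep := hGsep (q k) σ σ' hdiff (G σ N) (G σ' N) hp hq'
          have h1 : G σ N ∈ V k := by have := hccV τ; rwa [hτ] at this
          have h2 : G σ' N ∈ V k := by have := hccV τ'; rwa [hτ'] at this
          rw [hVdef] at h1 h2
          simp only [mem_ball] at h1 h2
          have htri : dist (G σ N) (G σ' N) < 2 * w k := by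
            calc dist (G σ N) (G σ' N)
                ≤ dist (G σ N) (B k).1 + dist ((B k).1) (G σ' N) := dist_triangle _ _ _
              _ < w k + w k := by rw [dist_comm ((B k).1)]; linarith
              _ = 2 * w k := by ring
          linarith [(hww k).2]
        have hinj : Set.InjOn
            (fun (τ : Fin N → Bool) (j : Fin (N - q k)) => τ ⟨q k + j.1, by omega⟩)
            ↑(Finset.univ.filter fun τ : Fin N → Bool => cc τ = k) := by
          intro τ hτ τ' hτ' heq
          simp only [Finset.coe_filter, Set.mem_setOf_eq, Finset.mem_univ, true_and]
            at hτ hτ'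
          funext i
          by_cases him : i.1 < q k
          · have := hagree τ τ' hτ hτ' i.1 him i.2
            simpa using this
          · have hj : i.1 - q k < N - q k := by omega
            have h5 := congrFun heq ⟨i.1 - q k, hj⟩
            simp only at h5
            have hidx : (⟨q k + (i.1 - q k), by omega⟩ : Fin N) = i := by
              apply Fin.ext; simp; omega
            rwa [hidx] at h5
        calc (Finset.univ.filter (fun τ : Fin N → Bool => cc τ = k)).card
            ≤ (Finset.univ : Finset (Fin (N - q k) → Bool)).card :=
              Finset.card_le_card_of_injOn _ (fun _ _ => Finset.mem_univ _) hinj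
          _ = 2 ^ (N - q k) := by
              simp [Finset.card_univ, Fintype.card_fun]
      have hcount : (2:ℕ) ^ N ≤ ∑ k ∈ T, 2 ^ (N - q k) := by
        have h1 : (Finset.univ : Finset (Fin N → Bool)).card
            = ∑ k ∈ T, (Finset.univ.filter fun τ : Fin N → Bool => cc τ = k).card :=
          Finset.card_eq_sum_card_fiberwise (fun τ _ => hccT τ)
        have h2 : (Finset.univ : Finset (Fin N → Bool)).card = 2 ^ N := by
          simp [Finset.card_univ, Fintype.card_fun]
        rw [← h2, h1]
        exact Finset.sum_le_sum hfiber
      have hsumR : (1:ℝ) ≤ ∑ k ∈ T, ((1:ℝ)/2) ^ q k := by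
        have h1 : ((2:ℝ)) ^ N ≤ ∑ k ∈ T, (2:ℝ) ^ (N - q k) := by
          have := hcount
          have hcast : ((2:ℕ):ℝ) ^ N ≤ ∑ k ∈ T, ((2:ℕ):ℝ) ^ (N - q k) := by
            exact_mod_cast this
          simpa using hcast
        have h2 : ∀ k ∈ T, (2:ℝ) ^ (N - q k) = 2 ^ N * (1/2) ^ q k := by
          intro k hk
          rw [pow_sub₀ (2:ℝ) (by norm_num) (hqN k hk)]
          rw [one_div, inv_pow]
        rw [Finset.sum_congr rfl h2, ← Finset.mul_sum] at h1
        have h2N : (0:ℝ) < 2 ^ N := by positivity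
        have := (mul_le_mul_iff_right₀ h2N).mp (by linarith [h1] :
          (2:ℝ)^N * 1 ≤ 2^N * ∑ k ∈ T, ((1:ℝ)/2) ^ q k)
        linarith
      have hsum0 : ∑ k ∈ T.filter (fun k => ¬ 0 < (B k).2), ((1:ℝ)/2) ^ q k ≤ 1/2 := by
        have hsummable : Summable (fun k : ℕ => ((1:ℝ)/2) ^ (k + 2)) := by
          refine ((summable_geometric_of_lt_one (by norm_num : (0:ℝ) ≤ 1/2)
            (by norm_num)).mul_left (1/4)).congr (fun k => by ring)
        calc ∑ k ∈ T.filter (fun k => ¬ 0 < (B k).2), ((1:ℝ)/2) ^ q k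
            = ∑ k ∈ T.filter (fun k => ¬ 0 < (B k).2), ((1:ℝ)/2) ^ (k + 2) := by
              refine Finset.sum_congr rfl (fun k hk => ?_)
              rw [hq2 k (Finset.mem_filter.mp hk).2]
          _ ≤ ∑' k : ℕ, ((1:ℝ)/2) ^ (k + 2) :=
              Summable.sum_le_tsum _ (fun k _ => by positivity) hsummable
          _ = 1/2 := by
              rw [tsum_congr (fun k => by ring :
                ∀ k : ℕ, ((1:ℝ)/2) ^ (k + 2) = (1/4) * (1/2) ^ k),
                tsum_mul_left, tsum_geometric_of_lt_one (by norm_num) (by norm_num)]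
              norm_num
      have hsumpos : (1:ℝ)/2 ≤ ∑ k ∈ T.filter (fun k => 0 < (B k).2), ((1:ℝ)/2) ^ q k := by
        have hsplit := Finset.sum_filter_add_sum_filter_not T (fun k => 0 < (B k).2)
          (fun k => ((1:ℝ)/2) ^ q k)
        linarith
      have hterm : ∀ k ∈ T.filter (fun k => 0 < (B k).2),
          ENNReal.ofReal (Real.exp (-(η * (β + 1))) * g (2 * r) * (1/2) ^ q k)
          ≤ ENNReal.ofReal (g (diam (closedBall (B k).1 (B k).2))) := by
        intro k hk
        have hkpos : 0 < (B k).2 := (Finset.mem_filter.mp hk).2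
        apply ENNReal.ofReal_le_ofReal
        rw [hdiam k]
        have h1 := hcrux (q k)
        have h2 : g (2 * R (q k + 1)) ≤ g (2 * (B k).2) :=
          hgmono (mem_Ioi.mpr (by linarith [hRpos (q k + 1)])) (mem_Ioi.mpr (by linarith))
            (by linarith [(hq1 k hkpos).1])
        linarith
      calc ENNReal.ofReal (A * g (2 * r))
          ≤ ENNReal.ofReal (∑ k ∈ T.filter (fun k => 0 < (B k).2),
              Real.exp (-(η * (β + 1))) * g (2 * r) * (1/2) ^ q k) := by
            apply ENNReal.ofReal_le_ofReal
            have hc : (0:ℝ) ≤ Real.exp (-(η * (β + 1))) * g (2 * r) := by positivity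
            calc A * g (2 * r)
                = (Real.exp (-(η * (β + 1))) * g (2 * r)) * (1/2) := by rw [hAdef]; ring
              _ ≤ (Real.exp (-(η * (β + 1))) * g (2 * r)) *
                  ∑ k ∈ T.filter (fun k => 0 < (B k).2), ((1:ℝ)/2) ^ q k :=
                    mul_le_mul_of_nonneg_left hsumpos hc
              _ = ∑ k ∈ T.filter (fun k => 0 < (B k).2),
                  Real.exp (-(η * (β + 1))) * g (2 * r) * (1/2) ^ q k := by
                    rw [Finset.mul_sum]
        _ = ∑ k ∈ T.filter (fun k => 0 < (B k).2),
            ENNReal.ofReal (Real.exp (-(η * (β + 1))) * g (2 * r) * (1/2) ^ q k) :=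
              ENNReal.ofReal_sum_of_nonneg (fun k _ => by positivity)
        _ ≤ ∑ k ∈ T.filter (fun k => 0 < (B k).2),
            ENNReal.ofReal (g (diam (closedBall (B k).1 (B k).2))) :=
              Finset.sum_le_sum hterm
        _ ≤ ∑' k, ENNReal.ofReal (g (diam (closedBall (B k).1 (B k).2))) :=
              ENNReal.sum_le_tsum _
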